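/- Let G be a finite simple graph, let x and y be two vertices of G, and let p ≥ 0 be a natural number. Then the number of (x,y)-important sets X ⊆ V(G) with d_G(X) ≤ p is at most 4^p. -/

import Mathlib

open scoped Classical

variable {V : Type*}

/-- The spanning subgraph of `G` whose edges are the *bad* edges w.r.t. the
2-coloring `φ` (edges whose endpoints get the same color). -/
def badGraph (G : SimpleGraph V) (φ : V → Fin 2) : SimpleGraph V where
  Adj u v := G.Adj u v ∧ φ u = φ v
  symm := ⟨fun u v h => ⟨h.1.symm, h.2.symm⟩⟩
  loopless := ⟨fun v h => G.loopless.irrefl v h.1⟩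

/-- The spanning subgraph of `G` whose edges are the *good* edges w.r.t. the
2-coloring `φ` (edges whose endpoints get different colors). -/
def goodGraph (G : SimpleGraph V) (φ : V → Fin 2) : SimpleGraph V where
  Adj u v := G.Adj u v ∧ φ u ≠ φ v
  symm := ⟨fun u v h => ⟨h.1.symm, Ne.symm h.2⟩⟩
  loopless := ⟨fun v h => G.loopless.irrefl v h.1⟩

/-- `X` is a monochromatic component of the 2-coloring `φ` of `G`: the vertex set of a
connected component of the subgraph of `G` induced by one of the two color classes. -/
def IsMonochromaticComponent (G : SimpleGraph V) (φ : V → Fin 2) (X : Set V) : Prop :=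
  ∃ (i : Fin 2) (c : (SimpleGraph.induce (φ ⁻¹' {i}) G).ConnectedComponent),
    X = Subtype.val '' c.supp

/-- `X` is a good component of the 2-coloring `φ` of `G`: the vertex set of a connected
component of the spanning subgraph of `G` consisting of the good edges. -/
def IsGoodComponent (G : SimpleGraph V) (φ : V → Fin 2) (X : Set V) : Prop :=
  ∃ c : (goodGraph G φ).ConnectedComponent, X = c.supp

/-- The cost of a 2-coloring `φ` of `G`: the sum, over all monochromatic components `X`
of `φ`, of `|X| - 1`. -/
noncomputable def cost (G : SimpleGraph V) (φ : V → Fin 2) : ℕ :=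
  ∑ᶠ X ∈ {X : Set V | IsMonochromaticComponent G φ X}, (Nat.card X - 1)

/-- A 2-coloring is a `(T₁,T₂)`-extension if it colors every vertex of `T₁` with the first
color and every vertex of `T₂` with the second color. -/
def IsExtension (φ : V → Fin 2) (T1 T2 : Set V) : Prop :=
  (∀ x ∈ T1, φ x = 0) ∧ (∀ x ∈ T2, φ x = 1)

/-- A cheapest `(T₁,T₂)`-extension of `G`: no `(T₁,T₂)`-extension has strictly smaller cost. -/
noncomputable def IsCheapestExtension (G : SimpleGraph V) (φ : V → Fin 2)
    (T1 T2 : Set V) : Prop :=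
  IsExtension φ T1 T2 ∧ ∀ ψ : V → Fin 2, IsExtension ψ T1 T2 → cost G φ ≤ cost G ψ

/-- `X` is `p`-connected in `G`: `|X| ≥ p` and for all subsets `X₁, X₂ ⊆ X` with
`|X₁| = |X₂| ≤ p` there are `|X₁|` pairwise vertex-disjoint paths in `G`, each with one
endpoint in `X₁` and the other endpoint in `X₂`. -/
def PConnected (G : SimpleGraph V) (p : ℕ) (X : Set V) : Prop :=
  p ≤ Nat.card X ∧
  ∀ X1 X2 : Finset V, ↑X1 ⊆ X → ↑X2 ⊆ X → X1.card = X2.card → X1.card ≤ p →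
    ∃ (a b : Fin X1.card → V) (w : ∀ i, G.Walk (a i) (b i)),
      (∀ i, (w i).IsPath) ∧ (∀ i, a i ∈ X1) ∧ (∀ i, b i ∈ X2) ∧
      ∀ i j, i ≠ j → ∀ x, x ∈ (w i).support → x ∉ (w j).support

/-- `X` is well-connected in `G` if it is `(|X|/2)`-connected. -/
def WellConnected (G : SimpleGraph V) (X : Set V) : Prop :=
  PConnected G (Nat.card X / 2) X

/-- `d_G(X)`: the number of edges of `G` with exactly one endpoint in `X`. -/
noncomputable def cutCard (G : SimpleGraph V) (X : Set V) : ℕ :=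
  Nat.card {e : Sym2 V | e ∈ G.edgeSet ∧ ∃ a b, e = s(a, b) ∧ a ∈ X ∧ b ∉ X}

/-- `X` is an `(x,y)`-important set in `G`. -/
noncomputable def ImportantSet (G : SimpleGraph V) (x y : V) (X : Set V) : Prop :=
  x ∈ X ∧ y ∉ X ∧ (SimpleGraph.induce X G).Connected ∧
  ¬ ∃ X' : Set V, X ⊂ X' ∧ y ∉ X' ∧ (SimpleGraph.induce X' G).Connected ∧
      cutCard G X' ≤ cutCard G X

/-- `G` has a tree decomposition of width at most `w`. -/
def HasTreewidthAtMost (G : SimpleGraph V) (w : ℕ) : Prop :=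
  ∃ (n : ℕ) (T : SimpleGraph (Fin n)) (bag : Fin n → Finset V),
    T.IsTree ∧
    (∀ v : V, ∃ i, v ∈ bag i) ∧
    (∀ u v : V, G.Adj u v → ∃ i, u ∈ bag i ∧ v ∈ bag i) ∧
    (∀ v : V, (SimpleGraph.induce {i | v ∈ bag i} T).Connected) ∧
    (∀ i, (bag i).card ≤ w + 1)

/-- The treewidth of `G`: the minimum width over all tree decompositions of `G`. -/
noncomputable def treewidth (G : SimpleGraph V) : ℕ :=
  sInf {w | HasTreewidthAtMost G w}

/-- The graph `G/S` obtained from `G` by contracting the edges of `S`: its vertices are the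
connected components of the graph `(V(G), S)`, two distinct components being adjacent iff
`G` has an edge with one endpoint in each of them. -/
def contractEdges (G : SimpleGraph V) (S : Set (Sym2 V)) :
    SimpleGraph (SimpleGraph.fromEdgeSet S).ConnectedComponent where
  Adj c d := c ≠ d ∧ ∃ u v : V, G.Adj u v ∧
      (SimpleGraph.fromEdgeSet S).connectedComponentMk u = c ∧
      (SimpleGraph.fromEdgeSet S).connectedComponentMk v = d
  symm := ⟨by
    rintro c d ⟨hcd, u, v, ha, hu, hv⟩
    exact ⟨hcd.symm, v, u, ha.symm, hv, hu⟩⟩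
  loopless := ⟨fun c h => h.1 rfl⟩

/-- The graph `G*` obtained from `G` by adding a new vertex (here `none`) adjacent to
exactly the vertices of `Y`. -/
def addApex (G : SimpleGraph V) (Y : Set V) : SimpleGraph (Option V) :=
  SimpleGraph.fromRel (fun a b =>
    (∃ u v : V, a = some u ∧ b = some v ∧ G.Adj u v) ∨
    (∃ u : V, a = some u ∧ b = none ∧ u ∈ Y))

/-- The set `Z`: the union, over all `x ∈ T`, of all `(x, y*)`-important sets `X` in
`G* = addApex G Y` with `d_{G*}(X) ≤ p`. -/
noncomputable def importantUnion (G : SimpleGraph V) (Y : Set V) (T : Set V) (p : ℕ) :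
    Set (Option V) :=
  {w | ∃ x ∈ T, ∃ X : Set (Option V),
    ImportantSet (addApex G Y) (some x) none X ∧ cutCard (addApex G Y) X ≤ p ∧ w ∈ X}

set_option linter.unusedSectionVars false

namespace Stmt11Aux
open SimpleGraph
variable {V : Type*} [Fintype V]

def cross (X : Set V) (e : Sym2 V) : Prop := ∃ a b, e = s(a, b) ∧ a ∈ X ∧ b ∉ X

def cutSet (G : SimpleGraph V) (X : Set V) : Set (Sym2 V) :=
  {e | e ∈ G.edgeSet ∧ cross X e}

lemma cutCard_eq (G : SimpleGraph V) (X : Set V) : cutCard G X = (cutSet G X).ncard :=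
  Nat.card_coe_set_eq _

lemma cutSet_finite (G : SimpleGraph V) (X : Set V) : (cutSet G X).Finite := Set.toFinite _

lemma cross_iff (X : Set V) (u v : V) :
    cross X s(u, v) ↔ (u ∈ X ∧ v ∉ X) ∨ (v ∈ X ∧ u ∉ X) := by
  constructor
  · rintro ⟨a, b, hab, ha, hb⟩
    rw [Sym2.eq_iff] at hab
    rcases hab with ⟨rfl, rfl⟩ | ⟨rfl, rfl⟩
    · exact Or.inl ⟨ha, hb⟩
    · exact Or.inr ⟨ha, hb⟩
  · rintro (⟨h1, h2⟩ | ⟨h1, h2⟩)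
    · exact ⟨u, v, rfl, h1, h2⟩
    · exact ⟨v, u, Sym2.eq_swap.symm, h1, h2⟩

lemma submod (G : SimpleGraph V) (A B : Set V) :
    cutCard G (A ∪ B) + cutCard G (A ∩ B) ≤ cutCard G A + cutCard G B := by
  simp only [cutCard_eq]
  have h1 : cutSet G (A ∪ B) ∪ cutSet G (A ∩ B) ⊆ cutSet G A ∪ cutSet G B := by
    rintro e he
    induction e using Sym2.ind with
    | _ u v =>
      simp only [cutSet, Set.mem_union, Set.mem_setOf_eq, cross_iff, Set.mem_union,
        Set.mem_inter_iff] at he ⊢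
      tauto
  have h2 : cutSet G (A ∪ B) ∩ cutSet G (A ∩ B) ⊆ cutSet G A ∩ cutSet G B := by
    rintro e he
    induction e using Sym2.ind with
    | _ u v =>
      simp only [cutSet, Set.mem_inter_iff, Set.mem_setOf_eq, cross_iff, Set.mem_union,
        Set.mem_inter_iff] at he ⊢
      tauto
  calc (cutSet G (A ∪ B)).ncard + (cutSet G (A ∩ B)).ncard
      = (cutSet G (A ∪ B) ∪ cutSet G (A ∩ B)).ncard
        + (cutSet G (A ∪ B) ∩ cutSet G (A ∩ B)).ncard := by
        rw [Set.ncard_union_add_ncard_inter _ _ (cutSet_finite _ _) (cutSet_finite _ _)]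
    _ ≤ (cutSet G A ∪ cutSet G B).ncard + (cutSet G A ∩ cutSet G B).ncard := by
        exact Nat.add_le_add (Set.ncard_le_ncard h1 (Set.toFinite _))
          (Set.ncard_le_ncard h2 (Set.toFinite _))
    _ = (cutSet G A).ncard + (cutSet G B).ncard :=
        Set.ncard_union_add_ncard_inter _ _ (cutSet_finite _ _) (cutSet_finite _ _)

lemma cutSet_subset_of_closed (G : SimpleGraph V) {Z Z' : Set V} (h1 : Z' ⊆ Z)
    (h2 : ∀ a b, G.Adj a b → a ∈ Z' → b ∈ Z → b ∈ Z') :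
    cutSet G Z' ⊆ cutSet G Z := by
  rintro e ⟨he, hc⟩
  induction e using Sym2.ind with
  | _ u v =>
    rw [cross_iff] at hc
    refine ⟨he, ?_⟩
    rw [SimpleGraph.mem_edgeSet] at he
    rw [cross_iff]
    rcases hc with ⟨hu, hv⟩ | ⟨hv, hu⟩
    · exact Or.inl ⟨h1 hu, fun hvZ => hv (h2 _ _ he hu hvZ)⟩
    · exact Or.inr ⟨h1 hv, fun huZ => hu (h2 _ _ he.symm hv huZ)⟩

end Stmt11Aux

namespace Stmt11Aux
open SimpleGraph
variable {V : Type*} [Fintype V]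

lemma reach_closed {H : SimpleGraph V} {P : Set V}
    (hP : ∀ a b, H.Adj a b → a ∈ P → b ∈ P) {a b : V}
    (h : H.Reachable a b) (ha : a ∈ P) : b ∈ P := by
  obtain ⟨w⟩ := h
  induction w with
  | nil => exact ha
  | cons hadj w ih => exact ih (hP _ _ hadj ha)

lemma reachable_induce_of_closed {G H : SimpleGraph V}
    (hle : ∀ a b, H.Adj a b → G.Adj a b) {P : Set V}
    (hP : ∀ a b, H.Adj a b → a ∈ P → b ∈ P) {a b : V}
    (h : H.Reachable a b) (ha : a ∈ P) (hb : b ∈ P) :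
    (G.induce P).Reachable ⟨a, ha⟩ ⟨b, hb⟩ := by
  obtain ⟨w⟩ := h
  induction w with
  | nil => exact Reachable.refl _
  | @cons a c b hadj w ih =>
    have hc : c ∈ P := hP _ _ hadj ha
    have hadj' : (G.induce P).Adj ⟨a, ha⟩ ⟨c, hc⟩ := hle _ _ hadj
    exact hadj'.reachable.trans (ih hc hb)

lemma induce_reachable_le {G H : SimpleGraph V} {W : Set V}
    (h : ∀ a b : V, a ∈ W → b ∈ W → G.Adj a b → H.Adj a b) {a b : ↥W}
    (hr : (G.induce W).Reachable a b) : H.Reachable a.val b.val := by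
  obtain ⟨w⟩ := hr
  induction w with
  | nil => exact Reachable.refl _
  | cons hadj w ih =>
    rename_i u v _
    exact (Adj.reachable (h u.val v.val u.2 v.2 hadj)).trans ih

/-- connected component of `W` inside `Z`. -/
lemma exists_component (G : SimpleGraph V) {Z W : Set V} (hWZ : W ⊆ Z)
    (hWc : (G.induce W).Connected) :
    ∃ Z' : Set V, W ⊆ Z' ∧ Z' ⊆ Z ∧ (G.induce Z').Connected ∧
      ∀ a b, G.Adj a b → a ∈ Z' → b ∈ Z → b ∈ Z' := by
  classical
  let H : SimpleGraph V :=
    { Adj := fun a b => G.Adj a b ∧ a ∈ Z ∧ b ∈ Z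
      symm := ⟨fun a b h => ⟨h.1.symm, h.2.2, h.2.1⟩⟩
      loopless := ⟨fun a h => G.loopless.irrefl a h.1⟩ }
  have hHle : ∀ a b, H.Adj a b → G.Adj a b := fun a b h => h.1
  refine ⟨{z | z ∈ Z ∧ ∃ w ∈ W, H.Reachable w z}, ?_, ?_, ?_, ?_⟩
  · exact fun w hw => ⟨hWZ hw, w, hw, Reachable.refl _⟩
  · exact fun z hz => hz.1
  · have hne : W.Nonempty := Set.nonempty_coe_sort.mp hWc.nonempty
    rw [SimpleGraph.connected_iff]
    constructor
    · rintro ⟨a, haZ, wa, hwa, ra⟩ ⟨b, hbZ, wb, hwb, rb⟩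
      have hWreach : (G.induce W).Reachable ⟨wa, hwa⟩ ⟨wb, hwb⟩ := hWc.preconnected _ _
      have hH : H.Reachable wa wb :=
        induce_reachable_le (H := H) (fun a b ha hb hadj => ⟨hadj, hWZ ha, hWZ hb⟩) hWreach
      have hab : H.Reachable a b := (ra.symm.trans hH).trans rb
      have hP : ∀ u v, H.Adj u v → u ∈ {z | z ∈ Z ∧ ∃ w ∈ W, H.Reachable w z} →
          v ∈ {z | z ∈ Z ∧ ∃ w ∈ W, H.Reachable w z} := by
        rintro u v huv ⟨huZ, w, hw, hr⟩
        exact ⟨huv.2.2, w, hw, hr.trans huv.reachable⟩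
      exact reachable_induce_of_closed hHle hP hab ⟨haZ, wa, hwa, ra⟩ ⟨hbZ, wb, hwb, rb⟩
    · obtain ⟨w, hw⟩ := hne
      exact ⟨⟨w, hWZ hw, w, hw, Reachable.refl _⟩⟩
  · rintro a b hab ⟨haZ, w, hw, hr⟩ hbZ
    exact ⟨hbZ, w, hw, hr.trans (Adj.reachable ⟨hab, haZ, hbZ⟩)⟩

/-- a nonempty closed subset of a connected set is everything -/
lemma closed_eq {G : SimpleGraph V} {X W : Set V} (hXc : (G.induce X).Connected)
    (hWX : W ⊆ X) (hne : W.Nonempty)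
    (hcl : ∀ a b, G.Adj a b → a ∈ W → b ∈ X → b ∈ W) : W = X := by
  refine Set.Subset.antisymm hWX (fun z hz => ?_)
  obtain ⟨w, hw⟩ := hne
  have hreach : (G.induce X).Reachable ⟨w, hWX hw⟩ ⟨z, hz⟩ := hXc.preconnected _ _
  have := reach_closed (H := G.induce X) (P := {a : ↥X | a.val ∈ W})
    (fun a b hab ha => hcl a.val b.val hab ha b.2) hreach hw
  exact this
end Stmt11Aux

namespace Stmt11Aux
open SimpleGraph
variable {V : Type*} [Fintype V]

noncomputable def lam (G : SimpleGraph V) (y : V) (S : Set V) : ℕ :=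
  sInf {n | ∃ Z : Set V, S ⊆ Z ∧ y ∉ Z ∧ cutCard G Z = n}

lemma lam_le {G : SimpleGraph V} {y : V} {S Z : Set V} (h : S ⊆ Z) (hy : y ∉ Z) :
    lam G y S ≤ cutCard G Z :=
  Nat.sInf_le ⟨Z, h, hy, rfl⟩

lemma exists_lam_min {G : SimpleGraph V} {y : V} {S : Set V} (hy : y ∉ S) :
    ∃ Z : Set V, S ⊆ Z ∧ y ∉ Z ∧ cutCard G Z = lam G y S := by
  have hne : {n | ∃ Z : Set V, S ⊆ Z ∧ y ∉ Z ∧ cutCard G Z = n}.Nonempty :=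
    ⟨cutCard G S, S, Set.Subset.rfl, hy, rfl⟩
  exact Nat.sInf_mem hne

/-- a maximal connected minimum cut around `S` -/
lemma exists_Xstar {G : SimpleGraph V} {y : V} {S : Set V}
    (hS : (G.induce S).Connected) (hy : y ∉ S) :
    ∃ Xs : Set V, S ⊆ Xs ∧ y ∉ Xs ∧ (G.induce Xs).Connected ∧
      cutCard G Xs = lam G y S ∧
      ∀ Z : Set V, S ⊆ Z → y ∉ Z → (G.induce Z).Connected → cutCard G Z = lam G y S →
        Xs ⊆ Z → Z = Xs := by
  classical
  set M : Set (Set V) :=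
    {Z | S ⊆ Z ∧ y ∉ Z ∧ (G.induce Z).Connected ∧ cutCard G Z = lam G y S} with hM
  have hMne : M.Nonempty := by
    obtain ⟨Z0, hSZ0, hyZ0, hc0⟩ := exists_lam_min (G := G) hy
    obtain ⟨Z', hWZ', hZ'Z, hconn', hcl'⟩ := exists_component G hSZ0 hS
    have hsub : cutSet G Z' ⊆ cutSet G Z0 := cutSet_subset_of_closed G hZ'Z hcl'
    have hle : cutCard G Z' ≤ lam G y S := by
      rw [cutCard_eq, ← hc0, cutCard_eq]
      exact Set.ncard_le_ncard hsub (cutSet_finite _ _)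
    have hyZ' : y ∉ Z' := fun h => hyZ0 (hZ'Z h)
    exact ⟨Z', hWZ', hyZ', hconn',
      le_antisymm hle (lam_le hWZ' hyZ')⟩
  have hMfin : M.Finite := Set.toFinite _
  obtain ⟨Xs, hXsM, hmax⟩ := hMfin.toFinset.exists_maximal
    (by rwa [Set.Finite.toFinset_nonempty])
  rw [Set.Finite.mem_toFinset] at hXsM
  obtain ⟨hS1, hS2, hS3, hS4⟩ := hXsM
  refine ⟨Xs, hS1, hS2, hS3, hS4, ?_⟩
  intro Z h1 h2 h3 h4 h5
  by_contra hne
  have hZM : Z ∈ hMfin.toFinset := by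
    rw [Set.Finite.mem_toFinset]; exact ⟨h1, h2, h3, h4⟩
  exact hne (Set.Subset.antisymm (hmax hZM h5) h5)

/-- every important set containing `S` contains `Xs` -/
lemma important_superset {G : SimpleGraph V} {x y : V} {S X Xs : Set V}
    (hX : ImportantSet G x y X) (hSX : S ⊆ X) (hSne : S.Nonempty)
    (hS1 : S ⊆ Xs) (hS2 : y ∉ Xs) (hS3 : (G.induce Xs).Connected)
    (hS4 : cutCard G Xs = lam G y S) : Xs ⊆ X := by
  by_contra hns
  obtain ⟨hx, hyX, hXc, hnot⟩ := hX
  apply hnot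
  refine ⟨X ∪ Xs, ?_, ?_, ?_, ?_⟩
  · constructor
    · exact Set.subset_union_left
    · intro hsub
      exact hns (fun z hz => hsub (Or.inr hz))
  · rintro (h | h); exact hyX h; exact hS2 h
  · exact induce_union_connected hXc.preconnected hS3.preconnected ⟨hSne.choose, hSX hSne.choose_spec, hS1 hSne.choose_spec⟩
  · have hsm := submod G X Xs
    have hint : lam G y S ≤ cutCard G (X ∩ Xs) :=
      lam_le (Set.subset_inter hSX hS1) (fun h => hyX h.1)
    omega
end Stmt11Aux

namespace Stmt11Aux
open SimpleGraph
variable {V : Type*} [Fintype V]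

lemma cutSet_deleteEdges (G : SimpleGraph V) (e0 : Sym2 V) (X : Set V) :
    cutSet (G.deleteEdges {e0}) X = cutSet G X \ {e0} := by
  ext e
  simp only [cutSet, Set.mem_setOf_eq, Set.mem_diff, Set.mem_singleton_iff,
    edgeSet_deleteEdges, Set.mem_diff, Set.mem_singleton_iff]
  tauto

lemma cutCard_deleteEdges_of_mem {G : SimpleGraph V} {e0 : Sym2 V} {X : Set V}
    (h : e0 ∈ cutSet G X) :
    cutCard (G.deleteEdges {e0}) X = cutCard G X - 1 := by
  rw [cutCard_eq, cutCard_eq, cutSet_deleteEdges]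
  exact Set.ncard_diff_singleton_of_mem h

lemma cutCard_le_deleteEdges_add_one (G : SimpleGraph V) (e0 : Sym2 V) (X : Set V) :
    cutCard G X ≤ cutCard (G.deleteEdges {e0}) X + 1 := by
  rw [cutCard_eq, cutCard_eq, cutSet_deleteEdges]
  calc (cutSet G X).ncard ≤ (cutSet G X \ {e0} ∪ {e0}).ncard := by
        apply Set.ncard_le_ncard _ (Set.Finite.union (Set.Finite.diff (cutSet_finite _ _))
          (Set.finite_singleton _))
        intro e he
        by_cases h : e = e0
        · exact Or.inr h
        · exact Or.inl ⟨he, h⟩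
    _ ≤ (cutSet G X \ {e0}).ncard + ({e0} : Set (Sym2 V)).ncard := Set.ncard_union_le _ _
    _ = (cutSet G X \ {e0}).ncard + 1 := by rw [Set.ncard_singleton]

lemma cutCard_pos_of_mem {G : SimpleGraph V} {e0 : Sym2 V} {X : Set V}
    (h : e0 ∈ cutSet G X) : 1 ≤ cutCard G X := by
  rw [cutCard_eq]
  exact (Set.ncard_pos (cutSet_finite _ _)).mpr ⟨e0, h⟩

lemma induce_deleteEdges_eq {G : SimpleGraph V} {u v : V} {X : Set V} (hv : v ∉ X) :
    (G.deleteEdges {s(u, v)}).induce X = G.induce X := by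
  ext a b
  simp only [comap_adj, Function.Embedding.coe_subtype, deleteEdges_adj,
    Set.mem_singleton_iff]
  constructor
  · exact fun h => h.1
  · intro h
    refine ⟨h, fun heq => ?_⟩
    rw [Sym2.eq_iff] at heq
    rcases heq with ⟨_, rfl⟩ | ⟨rfl, _⟩
    · exact hv b.2
    · exact hv a.2

lemma induce_mono_connected {G G' : SimpleGraph V} (h : G' ≤ G) {X : Set V}
    (hc : (G'.induce X).Connected) : (G.induce X).Connected := by
  apply hc.mono
  intro a b hab
  exact h hab

lemma singleton_connected (G : SimpleGraph V) (x : V) :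
    (G.induce {x}).Connected := by
  rw [connected_iff]
  refine ⟨?_, ⟨⟨x, rfl⟩⟩⟩
  rintro ⟨a, ha⟩ ⟨b, hb⟩
  have : a = b := by
    simp only [Set.mem_singleton_iff] at ha hb; rw [ha, hb]
  subst this
  rfl

lemma pair_connected {G : SimpleGraph V} {u v : V} (h : G.Adj u v) :
    (G.induce {u, v}).Connected := by
  rw [connected_iff]
  refine ⟨?_, ⟨⟨u, Or.inl rfl⟩⟩⟩
  have key : ∀ a : ↥({u, v} : Set V), (G.induce {u, v}).Reachable ⟨u, Or.inl rfl⟩ a := by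
    rintro ⟨a, ha⟩
    rcases ha with rfl | ha
    · rfl
    · rw [Set.mem_singleton_iff] at ha
      subst ha
      exact Adj.reachable (by exact h)
  intro a b
  exact (key a).symm.trans (key b)

lemma insert_connected {G : SimpleGraph V} {W : Set V} {u v : V}
    (hc : (G.induce W).Connected) (hu : u ∈ W) (h : G.Adj u v) :
    (G.induce (W ∪ {v})).Connected := by
  have h2 : (W ∪ {v} : Set V) = W ∪ {u, v} := by
    ext z; simp only [Set.mem_union, Set.mem_singleton_iff, Set.mem_insert_iff]
    constructor
    · rintro (hz | rfl)
      · exact Or.inl hz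
      · exact Or.inr (Or.inr rfl)
    · rintro (hz | rfl | rfl)
      · exact Or.inl hz
      · exact Or.inl hu
      · exact Or.inr rfl
  rw [h2]
  exact induce_union_connected hc.preconnected (pair_connected h).preconnected ⟨u, hu, Or.inl rfl⟩
end Stmt11Aux

namespace Stmt11Aux
open SimpleGraph
variable {V : Type*} [Fintype V]

def fam (G : SimpleGraph V) (x y : V) (S : Set V) (p : ℕ) : Set (Set V) :=
  {X | ImportantSet G x y X ∧ S ⊆ X ∧ cutCard G X ≤ p}

lemma fam_empty_of_lt {G : SimpleGraph V} {x y : V} {S : Set V} {p : ℕ}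
    (h : p < lam G y S) : fam G x y S p = ∅ := by
  ext X
  simp only [fam, Set.mem_setOf_eq, Set.mem_empty_iff_false, iff_false]
  rintro ⟨hi, hSX, hp⟩
  exact absurd (le_trans (lam_le hSX hi.2.1) hp) (Nat.not_le.mpr h)

lemma fam_ncard_le_one {G : SimpleGraph V} {x y : V} {S : Set V} {p : ℕ}
    (hS : (G.induce S).Connected) (hy : y ∉ S) (h0 : lam G y S = 0) :
    (fam G x y S p).ncard ≤ 1 := by
  obtain ⟨Xs, hS1, hS2, hS3, hS4, _⟩ := exists_Xstar hS hy
  have hSne : S.Nonempty := Set.nonempty_coe_sort.mp hS.nonempty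
  have hcut0 : cutSet G Xs = ∅ := by
    rw [← Set.ncard_eq_zero (cutSet_finite G Xs), ← cutCard_eq, hS4, h0]
  have hsub : fam G x y S p ⊆ {Xs} := by
    rintro X ⟨hi, hSX, _⟩
    have hXsX : Xs ⊆ X := important_superset hi hSX hSne hS1 hS2 hS3 hS4
    have : Xs = X := by
      refine closed_eq hi.2.2.1 hXsX (hSne.mono hS1) ?_
      intro a b hab ha hb
      by_contra hbn
      have : s(a, b) ∈ cutSet G Xs := ⟨(mem_edgeSet _).mpr hab, a, b, rfl, ha, hbn⟩
      rw [hcut0] at this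
      exact this
    simp [this.symm]
  calc (fam G x y S p).ncard ≤ ({Xs} : Set (Set V)).ncard :=
        Set.ncard_le_ncard hsub (Set.finite_singleton _)
    _ = 1 := Set.ncard_singleton _

lemma important_deleteEdges {G : SimpleGraph V} {x y u v : V} {X : Set V}
    (hX : ImportantSet G x y X) (hu : u ∈ X) (hv : v ∉ X) (hadj : G.Adj u v) :
    ImportantSet (G.deleteEdges {s(u, v)}) x y X := by
  obtain ⟨hx, hy, hc, hnot⟩ := hX
  have he0 : s(u, v) ∈ cutSet G X := ⟨(mem_edgeSet _).mpr hadj, u, v, rfl, hu, hv⟩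
  have hdx : cutCard (G.deleteEdges {s(u, v)}) X = cutCard G X - 1 :=
    cutCard_deleteEdges_of_mem he0
  refine ⟨hx, hy, ?_, ?_⟩
  · rw [induce_deleteEdges_eq hv]; exact hc
  · rintro ⟨X', hss, hy', hc', hle'⟩
    apply hnot
    have hXX' : X ⊆ X' := hss.subset
    have hcG : (G.induce X').Connected :=
      induce_mono_connected (SimpleGraph.deleteEdges_le _) hc'
    have hpos : 1 ≤ cutCard G X := cutCard_pos_of_mem he0
    have hd : cutCard G X' ≤ cutCard G X := by
      by_cases hvX' : v ∈ X'
      · have hnm : s(u, v) ∉ cutSet G X' := by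
          rintro ⟨_, hcr⟩
          rcases (cross_iff X' u v).mp hcr with ⟨_, h2⟩ | ⟨_, h2⟩
          · exact h2 hvX'
          · exact h2 (hXX' hu)
        have heq : cutCard G X' = cutCard (G.deleteEdges {s(u, v)}) X' := by
          rw [cutCard_eq, cutCard_eq, cutSet_deleteEdges,
            Set.diff_singleton_eq_self hnm]
        omega
      · have h1 : cutCard G X' ≤ cutCard (G.deleteEdges {s(u, v)}) X' + 1 :=
          cutCard_le_deleteEdges_add_one G _ X'
        omega
    exact ⟨X', hss, hy', hcG, hd⟩

lemma lam_insert {G : SimpleGraph V} {y u v : V} {S Xs : Set V}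
    (hS1 : S ⊆ Xs) (hS2 : y ∉ Xs) (hS3 : (G.induce Xs).Connected)
    (hmax : ∀ Z : Set V, S ⊆ Z → y ∉ Z → (G.induce Z).Connected →
      cutCard G Z = lam G y S → Xs ⊆ Z → Z = Xs)
    (hu : u ∈ Xs) (hv : v ∉ Xs) (hadj : G.Adj u v) (hvy : v ≠ y) :
    lam G y S + 1 ≤ lam G y (Xs ∪ {v}) := by
  by_contra hcon
  push_neg at hcon
  have hynew : y ∉ Xs ∪ {v} := by
    rintro (h | h)
    · exact hS2 h
    · exact hvy h.symm
  obtain ⟨Z, hZ1, hZ2, hZ3⟩ := exists_lam_min (G := G) hynew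
  have hXsZ : Xs ⊆ Z := Set.subset_union_left.trans hZ1
  have hSZ : S ⊆ Z := hS1.trans hXsZ
  have hdZ : cutCard G Z = lam G y S :=
    le_antisymm (by omega) (lam_le hSZ hZ2)
  obtain ⟨Z', hZ'1, hZ'2, hZ'3, hZ'4⟩ := exists_component G hXsZ hS3
  have hyZ' : y ∉ Z' := fun h => hZ2 (hZ'2 h)
  have hdZ' : cutCard G Z' = lam G y S := by
    refine le_antisymm ?_ (lam_le (hS1.trans hZ'1) hyZ')
    rw [cutCard_eq, ← hdZ, cutCard_eq]
    exact Set.ncard_le_ncard (cutSet_subset_of_closed G hZ'2 hZ'4) (cutSet_finite _ _)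
  have hvZ' : v ∈ Z' := hZ'4 u v hadj (hZ'1 hu) (hZ1 (Or.inr rfl))
  have := hmax Z' (hS1.trans hZ'1) hyZ' hZ'3 hdZ' hZ'1
  rw [this] at hvZ'
  exact hv hvZ'

lemma lam_deleteEdges_ge {G : SimpleGraph V} {y u v : V} {S Xs : Set V}
    (hS1 : S ⊆ Xs) (hS2 : y ∉ Xs) :
    lam G y S ≤ lam (G.deleteEdges {s(u, v)}) y Xs + 1 := by
  obtain ⟨Z, hZ1, hZ2, hZ3⟩ :=
    exists_lam_min (G := G.deleteEdges {s(u, v)}) (S := Xs) hS2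
  calc lam G y S ≤ cutCard G Z := lam_le (hS1.trans hZ1) hZ2
    _ ≤ cutCard (G.deleteEdges {s(u, v)}) Z + 1 := cutCard_le_deleteEdges_add_one _ _ _
    _ = lam (G.deleteEdges {s(u, v)}) y Xs + 1 := by rw [hZ3]
end Stmt11Aux

namespace Stmt11Aux
open SimpleGraph
variable {V : Type*} [Fintype V]

lemma key (x y : V) : ∀ (m : ℕ) (G : SimpleGraph V) (S : Set V) (p : ℕ),
    (G.induce S).Connected → y ∉ S → 2 * p ≤ m + lam G y S →
    (fam G x y S p).ncard ≤ 2 ^ m := by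
  intro m
  induction m with
  | zero =>
    intro G S p hS hy hm
    simp only [pow_zero]
    by_cases hlp : lam G y S ≤ p
    · have h0 : lam G y S = 0 := by omega
      exact fam_ncard_le_one hS hy h0
    · rw [fam_empty_of_lt (by omega)]
      simp
  | succ m ih =>
    intro G S p hS hy hm
    by_cases hlp : lam G y S ≤ p
    swap
    · rw [fam_empty_of_lt (by omega)]
      simp
    by_cases h0 : lam G y S = 0
    · calc (fam G x y S p).ncard ≤ 1 := fam_ncard_le_one hS hy h0
        _ ≤ 2 ^ (m + 1) := Nat.one_le_two_pow
    -- main branching case : 1 ≤ lam ≤ p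
    have hSne : S.Nonempty := Set.nonempty_coe_sort.mp hS.nonempty
    obtain ⟨Xs, hS1, hS2, hS3, hS4, hmax⟩ := exists_Xstar hS hy
    have hlam1 : 1 ≤ lam G y S := by omega
    have hcne : (cutSet G Xs).Nonempty := by
      rw [← Set.ncard_pos (cutSet_finite _ _), ← cutCard_eq, hS4]
      omega
    obtain ⟨e, he, hcr⟩ := hcne
    obtain ⟨u, v, rfl, hu, hv⟩ := hcr
    have hadj : G.Adj u v := (mem_edgeSet _).mp he
    set G' := G.deleteEdges {s(u, v)} with hG'
    have hsplit : fam G x y S p ⊆ fam G x y (Xs ∪ {v}) p ∪ fam G' x y Xs (p - 1) := by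
      rintro X ⟨hi, hSX, hp⟩
      have hXsX : Xs ⊆ X := important_superset hi hSX hSne hS1 hS2 hS3 hS4
      by_cases hvX : v ∈ X
      · left
        exact ⟨hi, Set.union_subset hXsX (Set.singleton_subset_iff.mpr hvX), hp⟩
      · right
        have he0 : s(u, v) ∈ cutSet G X :=
          ⟨(mem_edgeSet _).mpr hadj, u, v, rfl, hXsX hu, hvX⟩
        refine ⟨important_deleteEdges hi (hXsX hu) hvX hadj, hXsX, ?_⟩
        rw [cutCard_deleteEdges_of_mem he0]
        omega
    have htot : (fam G x y S p).ncard ≤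
        (fam G x y (Xs ∪ {v}) p).ncard + (fam G' x y Xs (p - 1)).ncard := by
      calc (fam G x y S p).ncard
          ≤ (fam G x y (Xs ∪ {v}) p ∪ fam G' x y Xs (p - 1)).ncard :=
            Set.ncard_le_ncard hsplit (Set.toFinite _)
        _ ≤ _ := Set.ncard_union_le _ _
    have hb1 : (fam G x y (Xs ∪ {v}) p).ncard ≤ 2 ^ m := by
      by_cases hvy : v = y
      · have : fam G x y (Xs ∪ {v}) p = ∅ := by
          ext X
          simp only [fam, Set.mem_setOf_eq, Set.mem_empty_iff_false, iff_false]
          rintro ⟨hi, hSX, _⟩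
          exact hi.2.1 (hSX (Or.inr hvy.symm))
        rw [this]
        simp [Nat.one_le_two_pow]
      · have hins := lam_insert hS1 hS2 hS3 hmax hu hv hadj hvy
        refine ih G (Xs ∪ {v}) p (insert_connected hS3 hu hadj) ?_ (by omega)
        rintro (h | h)
        · exact hS2 h
        · exact hvy h.symm
    have hb2 : (fam G' x y Xs (p - 1)).ncard ≤ 2 ^ m := by
      have hld : lam G y S ≤ lam G' y Xs + 1 :=
        lam_deleteEdges_ge (G := G) (u := u) (v := v) hS1 hS2
      refine ih G' Xs (p - 1) ?_ hS2 (by omega)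
      show ((G.deleteEdges {s(u, v)}).induce Xs).Connected
      rw [induce_deleteEdges_eq hv]
      exact hS3
    have hpow : 2 ^ (m + 1) = 2 ^ m + 2 ^ m := by ring
    omega

end Stmt11Aux



/-- for vertices `x`, `y` of `G` and `p ≥ 0`, the number of `(x,y)`-important
sets `X` with `d_G(X) ≤ p` is at most `4^p`. -/
theorem stmt11 {V : Type*} [Fintype V] (G : SimpleGraph V) (x y : V) (p : ℕ) :
    Nat.card {X : Set V | ImportantSet G x y X ∧ cutCard G X ≤ p} ≤ 4 ^ p := by
  classical
  have hcard : Nat.card {X : Set V | ImportantSet G x y X ∧ cutCard G X ≤ p}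
      = ({X : Set V | ImportantSet G x y X ∧ cutCard G X ≤ p}).ncard :=
    Nat.card_coe_set_eq _
  by_cases hxy : x = y
  · have : {X : Set V | ImportantSet G x y X ∧ cutCard G X ≤ p} = ∅ := by
      ext X
      simp only [Set.mem_setOf_eq, Set.mem_empty_iff_false, iff_false]
      rintro ⟨hi, _⟩
      exact hi.2.1 (hxy ▸ hi.1)
    rw [hcard, this]
    simp
  · have hset : {X : Set V | ImportantSet G x y X ∧ cutCard G X ≤ p}
        = Stmt11Aux.fam G x y {x} p := by
      ext X
      simp only [Set.mem_setOf_eq, Stmt11Aux.fam, Set.singleton_subset_iff]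
      exact ⟨fun ⟨h1, h2⟩ => ⟨h1, h1.1, h2⟩, fun ⟨h1, _, h3⟩ => ⟨h1, h3⟩⟩
    rw [hcard, hset]
    have hkey := Stmt11Aux.key x y (2 * p) G {x} p
      (Stmt11Aux.singleton_connected G x)
      (by simp only [Set.mem_singleton_iff]; exact fun h => hxy h.symm)
      (Nat.le_add_right _ _)
    calc (Stmt11Aux.fam G x y {x} p).ncard ≤ 2 ^ (2 * p) := hkey
      _ = 4 ^ p := by rw [pow_mul]; norm_num
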